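/- Fix k ≥ 2. Let A(v) = v^{k+1} + x_{k−1}v^{k−1} + ... + x₁v + x₀, B(v) = A'(v), Θ(x) = Res_v(A, B), and let L = {x ∈ ℝ^k : A and B have a common complex root but no common real root}. Then the Hausdorff dimension of L is at most k − 2. -/

import Mathlib

open Polynomial Finset

namespace AkAux

noncomputable def P (k : ℕ) (x : Fin k → ℝ) : ℝ[X] :=
  X ^ (k+1) + ∑ i : Fin k, C (x i) * X ^ (i : ℕ)

noncomputable def D (a s : ℝ) : ℝ[X] := (X ^ 2 - C (2*a) * X + C s) ^ 2

lemma P_monic (k : ℕ) (x : Fin k → ℝ) : (P k x).Monic :=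
  monic_X_pow_add ((degree_sum_fin_lt x).trans_le (by exact_mod_cast Nat.cast_le.2 (Nat.le_succ k)))

lemma P_natDegree (k : ℕ) (x : Fin k → ℝ) : (P k x).natDegree = k + 1 := by
  have h : degree (∑ i : Fin k, C (x i) * X ^ (i : ℕ)) < ((k+1 : ℕ) : WithBot ℕ) :=
    lt_of_lt_of_le (degree_sum_fin_lt x) (by exact_mod_cast Nat.cast_le.2 (Nat.le_succ k))
  have : (P k x).degree = ((k+1 : ℕ) : WithBot ℕ) := by
    rw [P, degree_add_eq_left_of_degree_lt (by simpa [degree_X_pow] using h), degree_X_pow]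
  exact natDegree_eq_of_degree_eq_some this

lemma P_coeff_lt {k n : ℕ} (x : Fin k → ℝ) (h : n < k) : (P k x).coeff n = x ⟨n, h⟩ := by
  rw [P, coeff_add, coeff_X_pow, if_neg (by omega), finset_sum_coeff]
  simp only [coeff_C_mul, coeff_X_pow, mul_ite, mul_one, mul_zero]
  rw [Finset.sum_eq_single (⟨n, h⟩ : Fin k)]
  · simp
  · intro b _ hb
    rw [if_neg]
    intro hnb
    exact hb (by ext; simp [← hnb])
  · simp

lemma P_coeff_k (k : ℕ) (x : Fin k → ℝ) : (P k x).coeff k = 0 := by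
  rw [P, coeff_add, coeff_X_pow, if_neg (by omega), finset_sum_coeff]
  simp only [coeff_C_mul, coeff_X_pow, mul_ite, mul_one, mul_zero]
  rw [Finset.sum_eq_zero, zero_add]
  intro b _
  rw [if_neg (by omega)]

lemma D_eq (a s : ℝ) :
    D a s = X^4 - C (4*a) * X^3 + C (4*a^2+2*s) * X^2 - C (4*a*s) * X + C (s^2) := by
  simp only [D, map_mul, map_add, map_pow, map_ofNat]
  ring

lemma quad_monic (a s : ℝ) : (X ^ 2 - C (2*a) * X + C s).Monic := by
  have : (X ^ 2 - C (2*a) * X + C s : ℝ[X]) = X ^ 2 + (C s - C (2*a) * X) := by ring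
  rw [this]
  apply monic_X_pow_add
  calc degree (C s - C (2*a) * X) ≤ max (degree (C s)) (degree (C (2*a) * X)) := degree_sub_le _ _
  _ < 2 := by
      apply max_lt (lt_of_le_of_lt degree_C_le (by norm_num))
      exact lt_of_le_of_lt (degree_C_mul_X_le _) (by norm_num)

lemma D_monic (a s : ℝ) : (D a s).Monic := (quad_monic a s).pow _

lemma quad_natDegree (a s : ℝ) : (X ^ 2 - C (2*a) * X + C s).natDegree = 2 := by
  have : (X ^ 2 - C (2*a) * X + C s : ℝ[X]) = C 1 * X ^ 2 + C (-(2*a)) * X + C s := by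
    simp; ring
  rw [this]
  exact natDegree_quadratic one_ne_zero

lemma D_natDegree (a s : ℝ) : (D a s).natDegree = 4 := by
  rw [D, natDegree_pow, quad_natDegree]

lemma D_nextCoeff (a s : ℝ) : (D a s).nextCoeff = -(4*a) := by
  rw [nextCoeff_of_natDegree_pos (by rw [D_natDegree]; norm_num), D_natDegree, D_eq]
  simp only [coeff_add, coeff_sub, coeff_C_mul, coeff_X_pow, coeff_C, coeff_X]
  norm_num

lemma sq_dvd_of_root_of_deriv_root {K : Type*} [Field K] {p : K[X]} {z : K}
    (h1 : p.IsRoot z) (h2 : (derivative p).IsRoot z) : (X - C z) ^ 2 ∣ p := by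
  obtain ⟨g, hg⟩ := (dvd_iff_isRoot.2 h1)
  have hd : derivative p = g + (X - C z) * derivative g := by
    rw [hg, derivative_mul]
    simp [derivative_sub]
  have : g.IsRoot z := by
    have := h2
    rw [hd] at this
    simpa [IsRoot] using this
  obtain ⟨g2, hg2⟩ := (dvd_iff_isRoot.2 this)
  exact ⟨g2, by rw [hg, hg2]; ring⟩

lemma exists_factor {p : ℝ[X]} {z : ℂ}
    (hz : aeval z p = 0) (hz' : aeval z (derivative p) = 0) (him : z.im ≠ 0) :
    D z.re (z.re^2 + z.im^2) ∣ p := by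
  set f := algebraMap ℝ ℂ
  have hroot : (p.map f).IsRoot z := by
    rwa [IsRoot, eval_map, ← aeval_def]
  have hroot' : (derivative (p.map f)).IsRoot z := by
    rw [derivative_map]
    rwa [IsRoot, eval_map, ← aeval_def]
  have hdvd1 : (X - C z) ^ 2 ∣ p.map f := sq_dvd_of_root_of_deriv_root hroot hroot'
  have hfix : (p.map f).map (starRingEnd ℂ) = p.map f := by
    rw [Polynomial.map_map]
    congr 1
    exact RingHom.ext fun r => Complex.conj_ofReal r
  have hdvd2 : (X - C (starRingEnd ℂ z)) ^ 2 ∣ p.map f := by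
    have := Polynomial.map_dvd (starRingEnd ℂ) hdvd1
    rwa [hfix, Polynomial.map_pow, Polynomial.map_sub, map_X, map_C] at this
  have hne : z ≠ starRingEnd ℂ z := fun h => him (Complex.conj_eq_iff_im.1 h.symm)
  have hcop : IsCoprime ((X - C z) ^ 2) ((X - C (starRingEnd ℂ z)) ^ 2) :=
    (isCoprime_X_sub_C_of_isUnit_sub ((sub_ne_zero.2 hne).isUnit)).pow
  have hdvd : (X - C z) ^ 2 * (X - C (starRingEnd ℂ z)) ^ 2 ∣ p.map f :=
    hcop.mul_dvd hdvd1 hdvd2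
  have h1 : (X - C z) * (X - C (starRingEnd ℂ z))
      = X ^ 2 - C (z + starRingEnd ℂ z) * X + C (z * starRingEnd ℂ z) := by
    simp only [map_add, map_mul]
    ring
  have e1 : f (2*z.re) = z + (starRingEnd ℂ) z := by
    rw [Complex.add_conj]; simp [f]
  have e2 : f (z.re^2+z.im^2) = z * (starRingEnd ℂ) z := by
    rw [Complex.mul_conj]; simp [f, Complex.normSq_apply]; ring
  have hq : (X^2 - C (2*z.re) * X + C (z.re^2+z.im^2) : ℝ[X]).map f
      = (X - C z) * (X - C (starRingEnd ℂ z)) := by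
    rw [Polynomial.map_add, Polynomial.map_sub, Polynomial.map_pow, Polynomial.map_mul,
      map_X, map_C, map_C, h1, e1, e2]
  have hDmap : (D z.re (z.re^2 + z.im^2)).map f
      = (X - C z) ^ 2 * (X - C (starRingEnd ℂ z)) ^ 2 := by
    rw [D, Polynomial.map_pow, hq, mul_pow]
  rw [← map_dvd_map f f.injective (D_monic _ _), hDmap]
  exact hdvd



lemma eval_P (k : ℕ) (x : Fin k → ℝ) (z : ℂ) :
    aeval z (P k x) = z ^ (k + 1) + ∑ i : Fin k, (x i : ℂ) * z ^ (i : ℕ) := by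
  simp [P]

lemma evalR_P (k : ℕ) (x : Fin k → ℝ) (v : ℝ) :
    aeval v (P k x) = v ^ (k + 1) + ∑ i : Fin k, x i * v ^ (i : ℕ) := by
  simp [P, eval_finset_sum]

lemma derivC_P (k : ℕ) (x : Fin k → ℝ) (z : ℂ) :
    deriv (fun w : ℂ => w ^ (k + 1) + ∑ i : Fin k, (x i : ℂ) * w ^ (i : ℕ)) z
      = aeval z (derivative (P k x)) := by
  have h : (fun w : ℂ => w ^ (k + 1) + ∑ i : Fin k, (x i : ℂ) * w ^ (i : ℕ))
      = fun w => aeval w (P k x) := funext fun w => (eval_P k x w).symm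
  rw [h, Polynomial.deriv_aeval]

lemma derivR_P (k : ℕ) (x : Fin k → ℝ) (v : ℝ) :
    deriv (fun w : ℝ => w ^ (k + 1) + ∑ i : Fin k, x i * w ^ (i : ℕ)) v
      = aeval v (derivative (P k x)) := by
  have h : (fun w : ℝ => w ^ (k + 1) + ∑ i : Fin k, x i * w ^ (i : ℕ))
      = fun w => aeval w (P k x) := funext fun w => (evalR_P k x w).symm
  rw [h, Polynomial.deriv_aeval]

lemma key {k : ℕ} (x : Fin k → ℝ)
    (h1 : ∃ z : ℂ, (z ^ (k + 1) + ∑ i : Fin k, (x i : ℂ) * z ^ (i : ℕ) = 0) ∧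
      deriv (fun w : ℂ => w ^ (k + 1) + ∑ i : Fin k, (x i : ℂ) * w ^ (i : ℕ)) z = 0)
    (h2 : ¬ ∃ v : ℝ, (v ^ (k + 1) + ∑ i : Fin k, x i * v ^ (i : ℕ) = 0) ∧
      deriv (fun w : ℝ => w ^ (k + 1) + ∑ i : Fin k, x i * w ^ (i : ℕ)) v = 0) :
    ∃ a b : ℝ, ∃ q : ℝ[X], P k x = D a (a^2+b^2) * q ∧ q.Monic ∧
      q.natDegree + 4 = k + 1 ∧ q.nextCoeff = 4 * a := by
  obtain ⟨z, hz1, hz2⟩ := h1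
  rw [derivC_P] at hz2
  rw [← eval_P k x z] at hz1
  have him : z.im ≠ 0 := by
    intro him0
    apply h2
    have hzre : z = ((z.re : ℝ) : ℂ) := Complex.ext rfl (by simpa using him0)
    refine ⟨z.re, ?_, ?_⟩
    · rw [← evalR_P]
      have := hz1
      rw [hzre, ← Complex.coe_algebraMap, Polynomial.aeval_algebraMap_apply, Complex.coe_algebraMap,
        Complex.ofReal_eq_zero] at this
      exact this
    · rw [derivR_P]
      have := hz2
      rw [hzre, ← Complex.coe_algebraMap, Polynomial.aeval_algebraMap_apply, Complex.coe_algebraMap,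
        Complex.ofReal_eq_zero] at this
      exact this
  obtain ⟨q, hq⟩ := exists_factor hz1 hz2 him
  have hqm : q.Monic := (D_monic _ _).of_mul_monic_left (hq ▸ P_monic k x)
  have hdeg : q.natDegree + 4 = k + 1 := by
    have := P_natDegree k x
    rw [hq, (D_monic _ _).natDegree_mul hqm, D_natDegree] at this
    omega
  have hnext : (P k x).nextCoeff = 0 := by
    rw [nextCoeff_of_natDegree_pos (by rw [P_natDegree]; omega), P_natDegree]
    simpa using P_coeff_k k x
  have hnc : q.nextCoeff = 4 * z.re := by
    rw [hq, (D_monic _ _).nextCoeff_mul hqm, D_nextCoeff] at hnext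
    linarith
  exact ⟨z.re, z.im, q, hq, hqm, hdeg, hnc⟩


lemma coeff_sum_mul (f g : ℕ → ℝ) (A B : Finset ℕ) (n : ℕ) :
    ((∑ u ∈ A, C (f u) * X ^ u) * (∑ v ∈ B, C (g v) * X ^ v)).coeff n
      = ∑ u ∈ A, ∑ v ∈ B, f u * g v * (if u + v = n then 1 else 0) := by
  rw [Finset.sum_mul_sum, finset_sum_coeff]
  refine Finset.sum_congr rfl fun u _ => ?_
  rw [finset_sum_coeff]
  refine Finset.sum_congr rfl fun v _ => ?_
  have h : (C (f u) * X ^ u * (C (g v) * X ^ v)) = C (f u * g v) * X ^ (u + v) := by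
    rw [C_mul, pow_add]; ring
  rw [h, coeff_C_mul, coeff_X_pow]
  by_cases h2 : u + v = n
  · simp [h2]
  · rw [if_neg (fun h3 : n = u + v => h2 h3.symm), if_neg h2]


noncomputable def dcf (a s : ℝ) : ℕ → ℝ := fun u =>
  if u = 0 then s^2 else if u = 1 then -(4*a*s) else if u = 2 then 4*a^2+2*s
  else if u = 3 then -(4*a) else 1

lemma D_sum (a s : ℝ) : D a s = ∑ u ∈ range 5, C (dcf a s u) * X ^ u := by
  rw [D_eq]
  simp [dcf, Finset.sum_range_succ]
  ring

noncomputable def qcf (m : ℕ) (p : Fin (m+2) → ℝ) : ℕ → ℝ := fun v =>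
  if v = m+1 then 1 else if v = m then 4 * p 0
  else if h : v + 2 < m + 2 then p ⟨v+2, h⟩ else 0

noncomputable def Phi (m : ℕ) (p : Fin (m+2) → ℝ) : EuclideanSpace ℝ (Fin (m+4)) :=
  (EuclideanSpace.equiv (Fin (m+4)) ℝ).symm fun i =>
    ∑ u ∈ range 5, ∑ v ∈ range (m+2),
      dcf (p 0) ((p 0)^2 + (p 1)^2) u * qcf m p v * (if u + v = (i:ℕ) then 1 else 0)

lemma Phi_apply (m : ℕ) (p : Fin (m+2) → ℝ) (i : Fin (m+4)) :
    Phi m p i = ∑ u ∈ range 5, ∑ v ∈ range (m+2),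
      dcf (p 0) ((p 0)^2 + (p 1)^2) u * qcf m p v * (if u + v = (i:ℕ) then 1 else 0) := rfl

lemma contDiff_dcf (m : ℕ) (u : ℕ) :
    ContDiff ℝ 1 (fun p : Fin (m+2) → ℝ => dcf (p 0) ((p 0)^2 + (p 1)^2) u) := by
  unfold dcf
  split_ifs <;> fun_prop

lemma contDiff_qcf (m : ℕ) (v : ℕ) :
    ContDiff ℝ 1 (fun p : Fin (m+2) → ℝ => qcf m p v) := by
  unfold qcf
  split_ifs <;> fun_prop

lemma contDiff_Phi (m : ℕ) : ContDiff ℝ 1 (Phi m) := by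
  unfold Phi
  apply ContDiff.comp (ContinuousLinearEquiv.contDiff _)
  apply contDiff_pi.2
  intro i
  apply ContDiff.sum
  intro u _
  apply ContDiff.sum
  intro v _
  exact ((contDiff_dcf m u).mul (contDiff_qcf m v)).mul contDiff_const

lemma mem_range_Phi (m : ℕ) (x : EuclideanSpace ℝ (Fin (m+4)))
    (a b : ℝ) (q : ℝ[X]) (hq : P (m+4) x = D a (a^2+b^2) * q) (hqm : q.Monic)
    (hdeg : q.natDegree = m+1) (hcm : q.coeff m = 4 * a) :
    x ∈ Set.range (Phi m) := by
  classical
  set p : Fin (m+2) → ℝ := fun j =>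
    if (j:ℕ) = 0 then a else if (j:ℕ) = 1 then b else q.coeff ((j:ℕ) - 2) with hp
  have p0 : p 0 = a := by simp [hp]
  have p1 : p 1 = b := by simp [hp]
  have hqcf : ∀ v ∈ range (m+2), qcf m p v = q.coeff v := by
    intro v hv
    rw [Finset.mem_range] at hv
    rcases Nat.lt_or_ge v m with hvm | hvm
    · rw [qcf]
      rw [if_neg (by omega), if_neg (by omega), dif_pos (by omega)]
      simp only [hp]
      rw [if_neg (by omega), if_neg (by omega)]
      congr 1
    · rcases Nat.eq_or_lt_of_le hvm with h | h
      · rw [qcf, if_neg (by omega), if_pos (by omega), p0, ← h] at *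
        exact hcm.symm
      · have : v = m + 1 := by omega
        subst this
        rw [qcf, if_pos rfl]
        rw [← hdeg]
        exact (hqm.coeff_natDegree).symm
  refine ⟨p, ?_⟩
  ext i
  rw [Phi_apply, p0, p1]
  rw [Finset.sum_congr rfl (fun u hu => Finset.sum_congr rfl (fun v hv => by rw [hqcf v hv]))]
  rw [← coeff_sum_mul (dcf a (a^2+b^2)) (fun v => q.coeff v) (range 5) (range (m+2)) i]
  rw [← D_sum]
  have hq2 : q = ∑ v ∈ range (m+2), C (q.coeff v) * X ^ v := by
    conv_lhs => rw [q.as_sum_range' (m+2) (by omega)]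
    exact Finset.sum_congr rfl fun v _ => (C_mul_X_pow_eq_monomial).symm
  rw [← hq2, ← hq, P_coeff_lt x i.isLt, Fin.eta]


noncomputable def Phi3 (p : Fin 1 → ℝ) : EuclideanSpace ℝ (Fin 3) :=
  (EuclideanSpace.equiv (Fin 3) ℝ).symm fun i =>
    if (i:ℕ) = 0 then (p 0)^2 else if (i:ℕ) = 2 then 2 * (p 0) else 0

lemma contDiff_Phi3 : ContDiff ℝ 1 Phi3 := by
  unfold Phi3
  apply ContDiff.comp (ContinuousLinearEquiv.contDiff _)
  apply contDiff_pi.2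
  intro i
  split_ifs <;> fun_prop

lemma mem_range_Phi3 (x : EuclideanSpace ℝ (Fin 3)) (s : ℝ)
    (hq : P 3 x = D 0 s) : x ∈ Set.range Phi3 := by
  refine ⟨fun _ => s, ?_⟩
  ext i
  have h1 : Phi3 (fun _ => s) i
      = if (i:ℕ) = 0 then s^2 else if (i:ℕ) = 2 then 2*s else 0 := rfl
  have hx : x i = (D 0 s).coeff i := by rw [← hq, P_coeff_lt x i.isLt, Fin.eta]
  rw [h1, hx, D_eq]
  fin_cases i <;>
    · simp only [coeff_add, coeff_sub, coeff_C_mul, coeff_X_pow, coeff_C, coeff_X]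
      norm_num

end AkAux

open scoped ENNReal

/-- For `A(v) = v^{k+1} + x_{k−1}v^{k−1} + ⋯ + x₀` and `B = A'`, the set of
parameters `x ∈ ℝ^k` for which `A` and `B` have a common complex root but no
common real root has Hausdorff dimension at most `k − 2`. -/
theorem Ak_exceptional_set_dim (k : ℕ) (hk : 2 ≤ k) :
    dimH {x : EuclideanSpace ℝ (Fin k) |
        (∃ z : ℂ, (z ^ (k + 1) + ∑ i : Fin k, (x i : ℂ) * z ^ (i : ℕ) = 0) ∧
          deriv (fun w : ℂ => w ^ (k + 1) + ∑ i : Fin k, (x i : ℂ) * w ^ (i : ℕ)) z = 0) ∧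
        ¬ ∃ v : ℝ, (v ^ (k + 1) + ∑ i : Fin k, x i * v ^ (i : ℕ) = 0) ∧
          deriv (fun w : ℝ => w ^ (k + 1) + ∑ i : Fin k, x i * w ^ (i : ℕ)) v = 0} ≤
      (k - 2 : ℕ) := by
  classical
  have hcase : k = 2 ∨ k = 3 ∨ ∃ m, k = m + 4 := by
    rcases Nat.lt_or_ge k 4 with h | h
    · omega
    · exact Or.inr (Or.inr ⟨k - 4, by omega⟩)
  rcases hcase with rfl | rfl | ⟨m, rfl⟩
  · have hempty : {x : EuclideanSpace ℝ (Fin 2) |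
        (∃ z : ℂ, (z ^ (2 + 1) + ∑ i : Fin 2, (x i : ℂ) * z ^ (i : ℕ) = 0) ∧
          deriv (fun w : ℂ => w ^ (2 + 1) + ∑ i : Fin 2, (x i : ℂ) * w ^ (i : ℕ)) z = 0) ∧
        ¬ ∃ v : ℝ, (v ^ (2 + 1) + ∑ i : Fin 2, x i * v ^ (i : ℕ) = 0) ∧
          deriv (fun w : ℝ => w ^ (2 + 1) + ∑ i : Fin 2, x i * w ^ (i : ℕ)) v = 0}
        = (∅ : Set (EuclideanSpace ℝ (Fin 2))) := by
      rw [Set.eq_empty_iff_forall_notMem]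
      intro x hx
      obtain ⟨a, b, q, hq, hqm, hdeg, hnc⟩ := AkAux.key x hx.1 hx.2
      omega
    rw [hempty, dimH_empty]
    exact zero_le
  · refine le_trans (dimH_mono ?_) (le_trans AkAux.contDiff_Phi3.dimH_range_le ?_)
    · intro x hx
      obtain ⟨a, b, q, hq, hqm, hdeg, hnc⟩ := AkAux.key x hx.1 hx.2
      have hq1 : q = 1 := hqm.natDegree_eq_zero.1 (by omega)
      have ha : a = 0 := by
        rw [hq1, ← map_one (f := Polynomial.C), Polynomial.nextCoeff_C_eq_zero] at hnc
        linarith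
      rw [hq1, mul_one, ha] at hq
      exact AkAux.mem_range_Phi3 x _ hq
    · rw [Module.finrank_fin_fun]
  · refine le_trans (dimH_mono ?_) (le_trans (AkAux.contDiff_Phi m).dimH_range_le ?_)
    · intro x hx
      obtain ⟨a, b, q, hq, hqm, hdeg, hnc⟩ := AkAux.key x hx.1 hx.2
      have hdeg' : q.natDegree = m + 1 := by omega
      have hcm : q.coeff m = 4 * a := by
        rw [Polynomial.nextCoeff_of_natDegree_pos (by omega), hdeg'] at hnc
        simpa using hnc
      exact AkAux.mem_range_Phi m x a b q hq hqm hdeg' hcm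
    · rw [Module.finrank_fin_fun]
      exact Nat.cast_le.2 (by omega)
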